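/- Let $c_1>0$, $c_2<0$, $c_3<0$ with $c_1+c_2+c_3=0$, and let $0<\lambda<1$. Define $g:(0,1)\to\mathbb{R}$ by $g(\varepsilon)= c_1\log(\varepsilon\lambda+\tfrac{1-\varepsilon}{2}) + c_2\log(\tfrac{1-\varepsilon}{2}) + c_3\log(\varepsilon(1-\lambda))$. Then $g$ attains its minimum on $(0,1)$ at $\varepsilon^*=\frac{c_3}{c_3+2\lambda c_2}$, and $g(\varepsilon^*)=c_3\log\frac{1-\lambda}{\lambda}+\log\frac{(-c_2)^{c_2}(-c_3)^{c_3}}{(-c_2-c_3)^{c_2+c_3}}$. -/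

import Mathlib

lemma log_diff_ge_aux (a b : ℝ) (ha : 0 < a) (hb : 0 < b) :
    1 - b / a ≤ Real.log a - Real.log b := by
  have h := Real.log_le_sub_one_of_pos (div_pos hb ha)
  rw [Real.log_div hb.ne' ha.ne'] at h
  linarith

lemma cancel_aux (w A n : ℝ) (hw : w ≠ 0) (hA : A ≠ 0) :
    w * (1 - n / (A * w)) = w - n / A := by
  field_simp

lemma log_four_aux (a a' b b' : ℝ) (ha : 0 < a) (ha' : 0 < a') (hb : 0 < b) (hb' : 0 < b') :
    1 - (a' * b) / (a * b') ≤ (Real.log a - Real.log a') - (Real.log b - Real.log b') := by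
  have h := log_diff_ge_aux (a * b') (a' * b) (by positivity) (by positivity)
  rw [Real.log_mul ha.ne' hb'.ne', Real.log_mul ha'.ne' hb.ne'] at h
  linarith

set_option maxHeartbeats 1000000 in
theorem stmt_13 (c₁ c₂ c₃ : ℝ) (h₁ : 0 < c₁) (h₂ : c₂ < 0) (h₃ : c₃ < 0)
    (hsum : c₁ + c₂ + c₃ = 0) (lam : ℝ) (hlam : 0 < lam ∧ lam < 1)
    (g : ℝ → ℝ)
    (hg : ∀ ε, g ε = c₁ * Real.log (ε * lam + (1 - ε) / 2)
      + c₂ * Real.log ((1 - ε) / 2) + c₃ * Real.log (ε * (1 - lam))) :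
    c₃ / (c₃ + 2 * lam * c₂) ∈ Set.Ioo (0 : ℝ) 1 ∧
    (∀ ε ∈ Set.Ioo (0 : ℝ) 1, g (c₃ / (c₃ + 2 * lam * c₂)) ≤ g ε) ∧
    g (c₃ / (c₃ + 2 * lam * c₂))
      = c₃ * Real.log ((1 - lam) / lam)
        + Real.log ((-c₂) ^ c₂ * (-c₃) ^ c₃ / (-c₂ - c₃) ^ (c₂ + c₃)) := by
  obtain ⟨hl0, hl1⟩ := hlam
  have hc1 : c₁ = -c₂ - c₃ := by linarith
  have hD : c₃ + 2 * lam * c₂ < 0 := by nlinarith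
  have hDne : c₃ + 2 * lam * c₂ ≠ 0 := hD.ne
  have hmD : 0 < -(c₃ + 2 * lam * c₂) := by linarith
  -- ε* ∈ (0,1)
  have hε0 : 0 < c₃ / (c₃ + 2 * lam * c₂) := div_pos_of_neg_of_neg h₃ hD
  have hε1 : c₃ / (c₃ + 2 * lam * c₂) < 1 := by
    have h1 : 1 - c₃ / (c₃ + 2 * lam * c₂) = (2 * lam * c₂) / (c₃ + 2 * lam * c₂) := by
      field_simp
      ring
    have h2 : 0 < (2 * lam * c₂) / (c₃ + 2 * lam * c₂) :=
      div_pos_of_neg_of_neg (by nlinarith) hD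
    linarith
  -- values of the three arguments at ε*
  have hA : c₃ / (c₃ + 2 * lam * c₂) * lam + (1 - c₃ / (c₃ + 2 * lam * c₂)) / 2
      = lam * c₁ / (-(c₃ + 2 * lam * c₂)) := by
    rw [hc1, eq_div_iff hmD.ne']; field_simp; ring
  have hB : (1 - c₃ / (c₃ + 2 * lam * c₂)) / 2
      = lam * (-c₂) / (-(c₃ + 2 * lam * c₂)) := by
    rw [eq_div_iff hmD.ne']; field_simp; ring
  have hC : c₃ / (c₃ + 2 * lam * c₂) * (1 - lam)
      = (1 - lam) * (-c₃) / (-(c₃ + 2 * lam * c₂)) := by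
    rw [eq_div_iff hmD.ne']; field_simp
  have hApos : 0 < lam * c₁ / (-(c₃ + 2 * lam * c₂)) := by positivity
  have hBpos : 0 < lam * (-c₂) / (-(c₃ + 2 * lam * c₂)) := by
    apply div_pos (by nlinarith) hmD
  have hCpos : 0 < (1 - lam) * (-c₃) / (-(c₃ + 2 * lam * c₂)) := by
    apply div_pos (by nlinarith) hmD
  -- g at ε*
  have hgstar : g (c₃ / (c₃ + 2 * lam * c₂))
      = c₁ * Real.log (lam * c₁ / (-(c₃ + 2 * lam * c₂)))
      + c₂ * Real.log (lam * (-c₂) / (-(c₃ + 2 * lam * c₂)))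
      + c₃ * Real.log ((1 - lam) * (-c₃) / (-(c₃ + 2 * lam * c₂))) := by
    rw [hg, hA, hB, hC]
  refine ⟨⟨hε0, hε1⟩, ?_, ?_⟩
  · -- minimality
    rintro ε ⟨he0, he1⟩
    have hApos' : 0 < ε * lam + (1 - ε) / 2 := by nlinarith
    have hBpos' : 0 < (1 - ε) / 2 := by linarith
    have hCpos' : 0 < ε * (1 - lam) := by nlinarith
    have i2 := log_four_aux (ε * lam + (1 - ε) / 2) (lam * c₁ / (-(c₃ + 2 * lam * c₂)))
      ((1 - ε) / 2) (lam * (-c₂) / (-(c₃ + 2 * lam * c₂))) hApos' hApos hBpos' hBpos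
    have i3 := log_four_aux (ε * lam + (1 - ε) / 2) (lam * c₁ / (-(c₃ + 2 * lam * c₂)))
      (ε * (1 - lam)) ((1 - lam) * (-c₃) / (-(c₃ + 2 * lam * c₂))) hApos' hApos hCpos' hCpos
    have i2' := mul_le_mul_of_nonneg_left i2 (by linarith : (0:ℝ) ≤ -c₂)
    have i3' := mul_le_mul_of_nonneg_left i3 (by linarith : (0:ℝ) ≤ -c₃)
    have hne2 : (-c₂ : ℝ) ≠ 0 := by linarith
    have hne3 : (-c₃ : ℝ) ≠ 0 := by linarith
    have q2 : (lam * c₁ / (-(c₃ + 2 * lam * c₂)) * ((1 - ε) / 2)) /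
          ((ε * lam + (1 - ε) / 2) * (lam * (-c₂) / (-(c₃ + 2 * lam * c₂))))
        = c₁ * ((1 - ε) / 2) / ((ε * lam + (1 - ε) / 2) * (-c₂)) := by
      rw [div_eq_div_iff (mul_pos hApos' hBpos).ne'
        (mul_pos hApos' (by linarith : (0:ℝ) < -c₂)).ne']
      field_simp
    have q3 : (lam * c₁ / (-(c₃ + 2 * lam * c₂)) * (ε * (1 - lam))) /
          ((ε * lam + (1 - ε) / 2) * ((1 - lam) * (-c₃) / (-(c₃ + 2 * lam * c₂))))
        = lam * c₁ * ε / ((ε * lam + (1 - ε) / 2) * (-c₃)) := by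
      rw [div_eq_div_iff (mul_pos hApos' hCpos).ne'
        (mul_pos hApos' (by linarith : (0:ℝ) < -c₃)).ne']
      field_simp
    have hzero : (-c₂) * (1 - (lam * c₁ / (-(c₃ + 2 * lam * c₂)) * ((1 - ε) / 2)) /
          ((ε * lam + (1 - ε) / 2) * (lam * (-c₂) / (-(c₃ + 2 * lam * c₂)))))
        + (-c₃) * (1 - (lam * c₁ / (-(c₃ + 2 * lam * c₂)) * (ε * (1 - lam))) /
          ((ε * lam + (1 - ε) / 2) * ((1 - lam) * (-c₃) / (-(c₃ + 2 * lam * c₂))))) = 0 := by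
      rw [q2, q3, cancel_aux (-c₂) _ _ hne2 hApos'.ne',
        cancel_aux (-c₃) _ _ hne3 hApos'.ne']
      have wsum : c₁ * ((1 - ε) / 2) / (ε * lam + (1 - ε) / 2)
          + lam * c₁ * ε / (ε * lam + (1 - ε) / 2) = c₁ := by
        rw [← add_div, div_eq_iff hApos'.ne']; ring
      linarith [wsum]
    have hdiff : g ε - g (c₃ / (c₃ + 2 * lam * c₂))
        = (-c₂) * ((Real.log (ε * lam + (1 - ε) / 2)
              - Real.log (lam * c₁ / (-(c₃ + 2 * lam * c₂))))
            - (Real.log ((1 - ε) / 2)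
              - Real.log (lam * (-c₂) / (-(c₃ + 2 * lam * c₂)))))
        + (-c₃) * ((Real.log (ε * lam + (1 - ε) / 2)
              - Real.log (lam * c₁ / (-(c₃ + 2 * lam * c₂))))
            - (Real.log (ε * (1 - lam))
              - Real.log ((1 - lam) * (-c₃) / (-(c₃ + 2 * lam * c₂))))) := by
      rw [hg ε, hgstar]
      linear_combination (Real.log (ε * lam + (1 - ε) / 2)
        - Real.log (lam * c₁ / (-(c₃ + 2 * lam * c₂)))) * hsum
    linarith
  · -- value at ε*
    have hne2 : (-c₂ : ℝ) ≠ 0 := by linarith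
    have hne3 : (-c₃ : ℝ) ≠ 0 := by linarith
    have hlne : lam ≠ 0 := hl0.ne'
    have hmDne : -(c₃ + 2 * lam * c₂) ≠ 0 := hmD.ne'
    have p2 : (0:ℝ) < -c₂ := by linarith
    have p3 : (0:ℝ) < -c₃ := by linarith
    have p23 : (0:ℝ) < -c₂ - c₃ := by linarith
    have plam : (0:ℝ) < 1 - lam := by linarith
    rw [hgstar,
      Real.log_div (mul_pos hl0 h₁).ne' hmDne, Real.log_mul hlne h₁.ne',
      Real.log_div (mul_pos hl0 p2).ne' hmDne, Real.log_mul hlne p2.ne',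
      Real.log_div (mul_pos plam p3).ne' hmDne, Real.log_mul plam.ne' p3.ne',
      Real.log_div (mul_pos (Real.rpow_pos_of_pos p2 c₂) (Real.rpow_pos_of_pos p3 c₃)).ne'
        (Real.rpow_pos_of_pos p23 (c₂ + c₃)).ne',
      Real.log_mul (Real.rpow_pos_of_pos p2 c₂).ne' (Real.rpow_pos_of_pos p3 c₃).ne',
      Real.log_rpow p2, Real.log_rpow p3, Real.log_rpow p23,
      Real.log_div plam.ne' hlne, ← hc1]
    linear_combination (Real.log lam + Real.log c₁
      - Real.log (-(c₃ + 2 * lam * c₂))) * hsum
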